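/- Let A ∈ GL_r(ℂ) be semisimple with all eigenvalues in the fundamental annulus {z : 1 ≤ |z| < |q|} (|q| > 1), and let X ∈ ℂ^r be such that γ(A) X = X for every group homomorphism γ : ℂ* → ℂ* with γ(q) = 1 (where γ(A) acts by applying γ to the eigenvalues of A in a fixed diagonalisation). Then A X = X. -/

import Mathlib

open Matrix

noncomputable def expUnit : ℚ →+ Additive ℂˣ where
  toFun x := Additive.ofMul (Units.mk0 (Complex.exp (2 * Real.pi * Complex.I * x))
    (Complex.exp_ne_zero _))
  map_zero' := by
    simp only [Rat.cast_zero, mul_zero, Complex.exp_zero]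
    exact congrArg Additive.ofMul (Units.ext (by simp))
  map_add' x y := by
    apply Additive.toMul.injective
    apply Units.ext
    show Complex.exp _ = Complex.exp _ * Complex.exp _
    rw [← Complex.exp_add]
    push_cast
    ring_nf

lemma expUnit_eq_one_iff (x : ℚ) :
    Additive.toMul (expUnit x) = 1 ↔ ∃ n : ℤ, (x : ℂ) = n := by
  have h2 : (2 * Real.pi * Complex.I : ℂ) ≠ 0 := by
    simp [Real.pi_ne_zero, Complex.I_ne_zero]
  constructor
  · intro hx
    have hx' : Complex.exp (2 * Real.pi * Complex.I * x) = 1 := congrArg Units.val hx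
    rw [Complex.exp_eq_one_iff] at hx'
    obtain ⟨n, hn⟩ := hx'
    refine ⟨n, mul_left_cancel₀ h2 ?_⟩
    rw [hn]; ring
  · rintro ⟨n, hn⟩
    apply Units.ext
    show Complex.exp _ = 1
    rw [hn, Complex.exp_eq_one_iff]
    exact ⟨n, by ring⟩

/-- Characters of `ℂˣ` trivial on `q` separate points modulo `q^ℤ`. -/
lemma mem_zpowers_of_forall_char (q : ℂˣ) (c : ℂˣ)
    (H : ∀ γ : ℂˣ →* ℂˣ, γ q = 1 → γ c = 1) : c ∈ Subgroup.zpowers q := by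
  by_contra hc
  set G := ℂˣ ⧸ Subgroup.zpowers q
  have ha : Additive.ofMul ((QuotientGroup.mk' (Subgroup.zpowers q)) c) ≠ (0 : Additive G) := by
    intro hcontra
    apply hc
    have : (QuotientGroup.mk' (Subgroup.zpowers q)) c = 1 := hcontra
    rwa [QuotientGroup.mk'_apply, QuotientGroup.eq_one_iff] at this
  obtain ⟨φ, hφ⟩ := CharacterModule.exists_character_apply_ne_zero_of_ne_zero (A := Additive G) ha
  -- build `e : AddCircle (1 : ℚ) →+ Additive ℂˣ`, injective
  have hker : AddSubgroup.zmultiples (1 : ℚ) ≤ (expUnit).ker := by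
    rintro x ⟨n, rfl⟩
    have h1 : Additive.toMul (expUnit (n • (1 : ℚ))) = 1 :=
      (expUnit_eq_one_iff _).mpr ⟨n, by push_cast; simp⟩
    exact Additive.toMul.injective h1
  let e : AddCircle (1 : ℚ) →+ Additive ℂˣ := QuotientAddGroup.lift _ expUnit hker
  have he : ∀ y : AddCircle (1 : ℚ), e y = 0 → y = 0 := by
    intro y hy
    induction y using QuotientAddGroup.induction_on with
    | H x =>
      have hx : Additive.toMul (expUnit x) = 1 := congrArg Additive.toMul hy
      obtain ⟨n, hn⟩ := (expUnit_eq_one_iff x).mp hx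
      have hxq : x = (n : ℚ) := by exact_mod_cast hn
      rw [hxq]
      exact (QuotientAddGroup.eq_zero_iff _).mpr ⟨n, by simp⟩
  -- the character of `ℂˣ`
  let ψ : Additive ℂˣ →+ Additive ℂˣ :=
    (e.comp ((φ : Additive G →+ AddCircle (1 : ℚ)).comp
      (MonoidHom.toAdditive (QuotientGroup.mk' (Subgroup.zpowers q)))))
  let γ : ℂˣ →* ℂˣ := MonoidHom.toAdditive.symm ψ
  have hγq : γ q = 1 := by
    have hq1 : (QuotientGroup.mk' (Subgroup.zpowers q)) q = 1 :=
      (QuotientGroup.eq_one_iff _).mpr (Subgroup.mem_zpowers q)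
    show Additive.toMul (ψ (Additive.ofMul q)) = 1
    simp only [ψ, AddMonoidHom.comp_apply]
    have : MonoidHom.toAdditive (QuotientGroup.mk' (Subgroup.zpowers q)) (Additive.ofMul q)
        = (0 : Additive G) := hq1
    show Additive.toMul (e (φ (MonoidHom.toAdditive (QuotientGroup.mk' (Subgroup.zpowers q))
      (Additive.ofMul q)))) = 1
    rw [this]
    simp
  have hγc := H γ hγq
  have hγc' : ψ (Additive.ofMul c) = 0 := hγc
  simp only [ψ, AddMonoidHom.comp_apply] at hγc'
  exact hφ (he _ hγc')

theorem semisimple_invariant_is_fixed (q : ℂˣ) (hq : 1 < ‖(q : ℂ)‖)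
    (r : ℕ) (c : Fin r → ℂˣ)
    (hann : ∀ i, 1 ≤ ‖((c i : ℂ))‖ ∧
      ‖((c i : ℂ))‖ < ‖(q : ℂ)‖)
    (P : Matrix (Fin r) (Fin r) ℂ) (hP : IsUnit P)
    (X : Fin r → ℂ)
    (h : ∀ γ : ℂˣ →* ℂˣ, γ q = 1 →
      (P * Matrix.diagonal (fun i => ((γ (c i) : ℂˣ) : ℂ)) * P⁻¹) *ᵥ X = X) :
    (P * Matrix.diagonal (fun i => ((c i : ℂˣ) : ℂ)) * P⁻¹) *ᵥ X = X := by
  have hPd : IsUnit P.det := (Matrix.isUnit_iff_isUnit_det P).mp hP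
  have hPP : P⁻¹ * P = 1 := Matrix.nonsing_inv_mul P hPd
  have hPP' : P * P⁻¹ = 1 := Matrix.mul_nonsing_inv P hPd
  set Y : Fin r → ℂ := P⁻¹ *ᵥ X with hY
  -- reduce the hypothesis to coordinates
  have hcoord : ∀ γ : ℂˣ →* ℂˣ, γ q = 1 → ∀ i, ((γ (c i) : ℂˣ) : ℂ) * Y i = Y i := by
    intro γ hγ i
    have := congrArg (fun v => P⁻¹ *ᵥ v) (h γ hγ)
    simp only [Matrix.mulVec_mulVec] at this
    rw [← Matrix.mul_assoc, ← Matrix.mul_assoc, hPP, Matrix.one_mul,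
      ← Matrix.mulVec_mulVec] at this
    have := congrFun this i
    simpa [Matrix.mulVec_diagonal, hY] using this
  -- each eigenvalue fixes Y
  have key : ∀ i, ((c i : ℂˣ) : ℂ) * Y i = Y i := by
    intro i
    by_cases hYi : Y i = 0
    · simp [hYi]
    · have hchar : ∀ γ : ℂˣ →* ℂˣ, γ q = 1 → γ (c i) = 1 := by
        intro γ hγ
        have := hcoord γ hγ i
        have h1 : (((γ (c i) : ℂˣ) : ℂ) - 1) * Y i = 0 := by linear_combination this
        rcases mul_eq_zero.mp h1 with h' | h'
        · exact Units.ext (by simpa [sub_eq_zero] using h')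
        · exact absurd h' hYi
      obtain ⟨n, hn⟩ := mem_zpowers_of_forall_char q (c i) hchar
      have habs : ‖((c i : ℂ))‖ = ‖(q : ℂ)‖ ^ n := by
        rw [← hn]
        push_cast
        rw [norm_zpow]
      have h0 : ‖(q : ℂ)‖ > 0 := lt_trans one_pos hq
      have hn0 : n = 0 := by
        rcases lt_trichotomy n 0 with hlt | heq | hgt
        · exfalso
          have : ‖(q : ℂ)‖ ^ n < 1 := zpow_lt_one_of_neg₀ hq hlt
          have := (hann i).1
          rw [habs] at this
          linarith [‹‖(q : ℂ)‖ ^ n < 1›]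
        · exact heq
        · exfalso
          have h1n : 1 ≤ n := hgt
          have : ‖(q : ℂ)‖ ^ (1 : ℤ) ≤ ‖(q : ℂ)‖ ^ n :=
            zpow_le_zpow_right₀ (le_of_lt hq) h1n
          rw [zpow_one] at this
          have := (hann i).2
          rw [habs] at this
          linarith
      have hc1 : c i = 1 := by rw [← hn, hn0]; simp
      rw [hc1]
      simp
  -- conclude
  have hDY : Matrix.diagonal (fun i => ((c i : ℂˣ) : ℂ)) *ᵥ Y = Y := by
    funext i
    simpa [Matrix.mulVec_diagonal] using key i
  calc (P * Matrix.diagonal (fun i => ((c i : ℂˣ) : ℂ)) * P⁻¹) *ᵥ X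
      = P *ᵥ (Matrix.diagonal (fun i => ((c i : ℂˣ) : ℂ)) *ᵥ (P⁻¹ *ᵥ X)) := by
        simp [Matrix.mulVec_mulVec, Matrix.mul_assoc]
    _ = P *ᵥ Y := by rw [← hY, hDY]
    _ = X := by rw [hY, Matrix.mulVec_mulVec, hPP', Matrix.one_mulVec]
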